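/- Fix n, m > 0 and 0 < a₁ < a₂, and let F_{a_i} be the c.d.f. of Beta(n·a_i, m·a_i). Then F_{a₁}(x) - F_{a₂}(x) > 0 for all x sufficiently close to 0 in (0,1), and F_{a₁}(x) - F_{a₂}(x) < 0 for all x sufficiently close to 1 in (0,1). -/

import Mathlib

open MeasureTheory intervalIntegral Set Filter Real

lemma beta_intg {p q : ℝ} (hp : 0 < p) (hq : 0 < q) :
    IntervalIntegrable (fun t : ℝ => t ^ (p - 1) * (1 - t) ^ (q - 1)) volume 0 1 := by
  have h1 : IntervalIntegrable (fun t : ℝ => t ^ (p - 1) * (1 - t) ^ (q - 1))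
      volume 0 (1/2) := by
    refine (intervalIntegrable_rpow' (by linarith)).mul_continuousOn ?_
    refine ContinuousOn.rpow_const (by fun_prop) fun t ht => Or.inl ?_
    rw [uIcc_of_le (by norm_num)] at ht
    have := ht.2
    intro h
    have : (1:ℝ) - t > 0 := by linarith
    linarith [h ▸ this]
  have h2 : IntervalIntegrable (fun t : ℝ => t ^ (p - 1) * (1 - t) ^ (q - 1))
      volume (1/2) 1 := by
    have hb : IntervalIntegrable (fun t : ℝ => (1 - t) ^ (q - 1)) volume (1/2) 1 := by
      have := (intervalIntegrable_rpow' (a := 0) (b := 1/2)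
        (by linarith : (-1:ℝ) < q - 1)).comp_sub_left 1
      norm_num at this
      exact this.symm
    refine hb.continuousOn_mul ?_
    refine ContinuousOn.rpow_const (by fun_prop) fun t ht => Or.inl ?_
    rw [uIcc_of_le (by norm_num)] at ht
    intro h; rw [h] at ht; norm_num at ht
  exact h1.trans h2

lemma beta_intg_sub {p q x y : ℝ} (hp : 0 < p) (hq : 0 < q)
    (hx : 0 ≤ x) (hx1 : x ≤ 1) (hy : 0 ≤ y) (hy1 : y ≤ 1) :
    IntervalIntegrable (fun t : ℝ => t ^ (p - 1) * (1 - t) ^ (q - 1)) volume x y := by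
  refine (beta_intg hp hq).mono_set ?_
  rw [uIcc_of_le (by norm_num : (0:ℝ) ≤ 1)]
  exact uIcc_subset_Icc ⟨hx, hx1⟩ ⟨hy, hy1⟩

lemma beta_pos {p q : ℝ} (hp : 0 < p) (hq : 0 < q) :
    0 < ∫ t in (0:ℝ)..1, t ^ (p - 1) * (1 - t) ^ (q - 1) := by
  refine intervalIntegral_pos_of_pos_on (beta_intg hp hq) (fun t ht => ?_) one_pos
  exact mul_pos (rpow_pos_of_pos ht.1 _) (rpow_pos_of_pos (by linarith [ht.2]) _)

lemma zbound {q : ℝ} {z : ℝ} (hz : z ∈ Icc (1/2 : ℝ) 1) :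
    min 1 ((1/2 : ℝ) ^ (q - 1)) ≤ z ^ (q - 1) ∧
      z ^ (q - 1) ≤ max 1 ((1/2 : ℝ) ^ (q - 1)) := by
  have hz0 : (0:ℝ) < z := by linarith [hz.1]
  rcases le_total 0 (q - 1) with h | h
  · constructor
    · exact le_trans (min_le_right _ _) (rpow_le_rpow (by norm_num) hz.1 h)
    · exact le_trans (rpow_le_one hz0.le hz.2 h) (le_max_left _ _)
  · constructor
    · refine le_trans (min_le_left _ _) ?_
      have := rpow_le_rpow_of_nonpos hz0 hz.2 h
      simpa using this
    · exact le_trans (rpow_le_rpow_of_nonpos (by norm_num) hz.1 h) (le_max_right _ _)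

lemma int_rpow_eq {p x : ℝ} (hp : 0 < p) :
    ∫ t in (0:ℝ)..x, t ^ (p - 1) = x ^ p / p := by
  rw [integral_rpow (Or.inl (by linarith))]
  have h1 : p - 1 + 1 = p := by ring
  rw [h1, Real.zero_rpow hp.ne', sub_zero]

lemma beta_lb {p q x : ℝ} (hp : 0 < p) (hq : 0 < q) (hx0 : 0 < x) (hx : x ≤ 1/2) :
    min 1 ((1/2 : ℝ) ^ (q - 1)) * (x ^ p / p)
      ≤ ∫ t in (0:ℝ)..x, t ^ (p - 1) * (1 - t) ^ (q - 1) := by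
  have h1 : IntervalIntegrable (fun t : ℝ => min 1 ((1/2 : ℝ) ^ (q - 1)) * t ^ (p - 1))
      volume 0 x := (intervalIntegrable_rpow' (by linarith)).const_mul _
  have h2 := beta_intg_sub hp hq le_rfl zero_le_one hx0.le (by linarith)
  have h3 := integral_mono_on hx0.le h1 h2 (fun t ht => ?_)
  · rw [intervalIntegral.integral_const_mul, int_rpow_eq hp] at h3; exact h3
  · have hz := (zbound (q := q) (z := 1 - t) ⟨by linarith [ht.2], by linarith [ht.1]⟩).1
    calc min 1 ((1/2 : ℝ) ^ (q - 1)) * t ^ (p - 1)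
        ≤ (1 - t) ^ (q - 1) * t ^ (p - 1) :=
          mul_le_mul_of_nonneg_right hz (rpow_nonneg ht.1 _)
      _ = t ^ (p - 1) * (1 - t) ^ (q - 1) := mul_comm _ _

lemma beta_ub {p q x : ℝ} (hp : 0 < p) (hq : 0 < q) (hx0 : 0 < x) (hx : x ≤ 1/2) :
    (∫ t in (0:ℝ)..x, t ^ (p - 1) * (1 - t) ^ (q - 1))
      ≤ max 1 ((1/2 : ℝ) ^ (q - 1)) * (x ^ p / p) := by
  have h1 : IntervalIntegrable (fun t : ℝ => max 1 ((1/2 : ℝ) ^ (q - 1)) * t ^ (p - 1))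
      volume 0 x := (intervalIntegrable_rpow' (by linarith)).const_mul _
  have h2 := beta_intg_sub hp hq le_rfl zero_le_one hx0.le (by linarith)
  have h3 := integral_mono_on hx0.le h2 h1 (fun t ht => ?_)
  · rw [intervalIntegral.integral_const_mul, int_rpow_eq hp] at h3; exact h3
  · have hz := (zbound (q := q) (z := 1 - t) ⟨by linarith [ht.2], by linarith [ht.1]⟩).2
    calc t ^ (p - 1) * (1 - t) ^ (q - 1)
        = (1 - t) ^ (q - 1) * t ^ (p - 1) := mul_comm _ _
      _ ≤ max 1 ((1/2 : ℝ) ^ (q - 1)) * t ^ (p - 1) :=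
          mul_le_mul_of_nonneg_right hz (rpow_nonneg ht.1 _)

/-- Core lemma: difference of normalized incomplete beta integrals is positive near 0. -/
lemma beta_core (n m a₁ a₂ : ℝ) (hn : 0 < n) (hm : 0 < m)
    (ha₁ : 0 < a₁) (ha : a₁ < a₂) :
    ∀ᶠ x in nhdsWithin 0 (Set.Ioi (0:ℝ)),
      (∫ t in (0:ℝ)..x, t ^ (n*a₁ - 1) * (1 - t) ^ (m*a₁ - 1))
          / (∫ t in (0:ℝ)..1, t ^ (n*a₁ - 1) * (1 - t) ^ (m*a₁ - 1))
        - (∫ t in (0:ℝ)..x, t ^ (n*a₂ - 1) * (1 - t) ^ (m*a₂ - 1))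
          / (∫ t in (0:ℝ)..1, t ^ (n*a₂ - 1) * (1 - t) ^ (m*a₂ - 1)) > 0 := by
  have hp₁ : 0 < n * a₁ := mul_pos hn ha₁
  have hp₂ : 0 < n * a₂ := mul_pos hn (ha₁.trans ha)
  have hq₁ : 0 < m * a₁ := mul_pos hm ha₁
  have hq₂ : 0 < m * a₂ := mul_pos hm (ha₁.trans ha)
  have hB₁ := beta_pos hp₁ hq₁
  have hB₂ := beta_pos hp₂ hq₂
  set B₁ := ∫ t in (0:ℝ)..1, t ^ (n*a₁ - 1) * (1 - t) ^ (m*a₁ - 1)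
  set B₂ := ∫ t in (0:ℝ)..1, t ^ (n*a₂ - 1) * (1 - t) ^ (m*a₂ - 1)
  set K₁ : ℝ := min 1 ((1/2 : ℝ) ^ (m*a₁ - 1)) / (n*a₁ * B₁) with hK₁def
  set K₂ : ℝ := max 1 ((1/2 : ℝ) ^ (m*a₂ - 1)) / (n*a₂ * B₂) with hK₂def
  have hK₁ : 0 < K₁ := div_pos (lt_min one_pos (rpow_pos_of_pos (by norm_num) _))
    (mul_pos hp₁ hB₁)
  have hK₂ : 0 < K₂ := div_pos (lt_of_lt_of_le one_pos (le_max_left _ _))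
    (mul_pos hp₂ hB₂)
  have hd : 0 < n*a₂ - n*a₁ := by nlinarith
  have htend : Tendsto (fun x : ℝ => x ^ (n*a₂ - n*a₁) * K₂)
      (nhdsWithin 0 (Set.Ioi (0:ℝ))) (nhds 0) := by
    have hc : ContinuousAt (fun x : ℝ => x ^ (n*a₂ - n*a₁)) 0 :=
      continuousAt_rpow_const 0 _ (Or.inr hd.le)
    have := (hc.tendsto.mono_left (nhdsWithin_le_nhds (s := Set.Ioi (0:ℝ)))).mul_const K₂
    simpa [Real.zero_rpow hd.ne'] using this
  have hev1 : ∀ᶠ x in nhdsWithin 0 (Set.Ioi (0:ℝ)), x ^ (n*a₂ - n*a₁) * K₂ < K₁ :=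
    htend.eventually_lt_const hK₁
  have hev2 : ∀ᶠ x in nhdsWithin 0 (Set.Ioi (0:ℝ)), x ∈ Set.Ioo (0:ℝ) (1/2) :=
    eventually_of_mem (Ioo_mem_nhdsGT_of_mem ⟨le_refl 0, by norm_num⟩) (fun x hx => hx)
  filter_upwards [hev1, hev2] with x hlt hx
  obtain ⟨hx0, hx2⟩ := hx
  have h1 : K₁ * x ^ (n*a₁) ≤ (∫ t in (0:ℝ)..x, t ^ (n*a₁ - 1) * (1 - t) ^ (m*a₁ - 1)) / B₁ := by
    have e : K₁ * x ^ (n*a₁)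
        = (min 1 ((1/2 : ℝ) ^ (m*a₁ - 1)) * (x ^ (n*a₁) / (n*a₁))) / B₁ := by
      rw [hK₁def]; field_simp
    rw [e]
    exact (div_le_div_iff_of_pos_right hB₁).mpr (beta_lb hp₁ hq₁ hx0 hx2.le)
  have h2 : (∫ t in (0:ℝ)..x, t ^ (n*a₂ - 1) * (1 - t) ^ (m*a₂ - 1)) / B₂
      ≤ K₂ * x ^ (n*a₂) := by
    have e : K₂ * x ^ (n*a₂)
        = (max 1 ((1/2 : ℝ) ^ (m*a₂ - 1)) * (x ^ (n*a₂) / (n*a₂))) / B₂ := by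
      rw [hK₂def]; field_simp
    rw [e]
    exact (div_le_div_iff_of_pos_right hB₂).mpr (beta_ub hp₂ hq₂ hx0 hx2.le)
  have h3 : K₂ * x ^ (n*a₂) < K₁ * x ^ (n*a₁) := by
    have hxp : x ^ (n*a₂) = x ^ (n*a₁) * x ^ (n*a₂ - n*a₁) := by
      rw [← Real.rpow_add hx0]; ring_nf
    calc K₂ * x ^ (n*a₂) = (x ^ (n*a₂ - n*a₁) * K₂) * x ^ (n*a₁) := by rw [hxp]; ring
      _ < K₁ * x ^ (n*a₁) := mul_lt_mul_of_pos_right hlt (rpow_pos_of_pos hx0 _)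
  linarith

lemma beta_refl {p q x : ℝ} (hx1 : x ≤ 1) :
    ∫ t in x..(1:ℝ), t ^ (p - 1) * (1 - t) ^ (q - 1)
      = ∫ s in (0:ℝ)..(1 - x), s ^ (q - 1) * (1 - s) ^ (p - 1) := by
  have h := integral_comp_sub_left (a := x) (b := 1)
    (fun s : ℝ => s ^ (q - 1) * (1 - s) ^ (p - 1)) 1
  simp only [sub_sub_cancel, sub_self] at h
  rw [← h]
  exact integral_congr fun t _ => mul_comm _ _

lemma beta_symm {p q : ℝ} :
    (∫ t in (0:ℝ)..1, t ^ (p - 1) * (1 - t) ^ (q - 1))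
      = ∫ s in (0:ℝ)..1, s ^ (q - 1) * (1 - s) ^ (p - 1) := by
  simpa using beta_refl (p := p) (q := q) (x := 0) zero_le_one

lemma beta_swap {p q x : ℝ} (hp : 0 < p) (hq : 0 < q) (hx0 : 0 ≤ x) (hx1 : x ≤ 1) :
    ∫ t in (0:ℝ)..x, t ^ (p - 1) * (1 - t) ^ (q - 1)
      = (∫ s in (0:ℝ)..1, s ^ (q - 1) * (1 - s) ^ (p - 1))
        - ∫ s in (0:ℝ)..(1 - x), s ^ (q - 1) * (1 - s) ^ (p - 1) := by
  have hadd := integral_add_adjacent_intervals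
    (beta_intg_sub hp hq le_rfl zero_le_one hx0 hx1)
    (beta_intg_sub hp hq hx0 hx1 zero_le_one le_rfl)
  have h1 := beta_refl (p := p) (q := q) hx1
  have h2 := beta_symm (p := p) (q := q)
  linarith

/-- For the Beta(na, ma) c.d.f.'s with 0 < a₁ < a₂, F_{a₁} - F_{a₂} is positive near 0
and negative near 1. -/
theorem stmt_9 (n m a₁ a₂ : ℝ) (hn : 0 < n) (hm : 0 < m)
    (ha₁ : 0 < a₁) (ha : a₁ < a₂)
    (F : ℝ → ℝ → ℝ)
    (hF : ∀ a, ∀ x, F a x = (∫ t in (0:ℝ)..x, t ^ (n*a - 1) * (1 - t) ^ (m*a - 1))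
        / (∫ t in (0:ℝ)..1, t ^ (n*a - 1) * (1 - t) ^ (m*a - 1))) :
    (∀ᶠ x in nhdsWithin 0 (Set.Ioi (0:ℝ)) ⊓ Filter.principal (Set.Ioo (0:ℝ) 1),
        F a₁ x - F a₂ x > 0) ∧
    (∀ᶠ x in nhdsWithin 1 (Set.Iio (1:ℝ)) ⊓ Filter.principal (Set.Ioo (0:ℝ) 1),
        F a₁ x - F a₂ x < 0) := by
  have hp₁ : 0 < n * a₁ := mul_pos hn ha₁
  have hp₂ : 0 < n * a₂ := mul_pos hn (ha₁.trans ha)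
  have hq₁ : 0 < m * a₁ := mul_pos hm ha₁
  have hq₂ : 0 < m * a₂ := mul_pos hm (ha₁.trans ha)
  constructor
  · rw [Filter.eventually_inf_principal]
    filter_upwards [beta_core n m a₁ a₂ hn hm ha₁ ha] with x hx _
    rw [hF a₁ x, hF a₂ x]
    exact hx
  · rw [Filter.eventually_inf_principal]
    have htend : Tendsto (fun x : ℝ => 1 - x) (nhdsWithin 1 (Set.Iio (1:ℝ)))
        (nhdsWithin 0 (Set.Ioi (0:ℝ))) := by
      rw [tendsto_nhdsWithin_iff]
      constructor
      · have h : Tendsto (fun x : ℝ => 1 - x) (nhds 1) (nhds (1 - 1)) :=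
          (continuous_const.sub continuous_id).tendsto 1
        simpa using h.mono_left nhdsWithin_le_nhds
      · filter_upwards [self_mem_nhdsWithin] with x hx
        exact Set.mem_Ioi.mpr (sub_pos.mpr (Set.mem_Iio.mp hx))
    filter_upwards [htend.eventually (beta_core m n a₁ a₂ hm hn ha₁ ha)] with x hx hmem
    rw [hF a₁ x, hF a₂ x]
    have hB₁' := beta_pos hq₁ hp₁
    have hB₂' := beta_pos hq₂ hp₂
    have e₁ := beta_swap hp₁ hq₁ hmem.1.le hmem.2.le
    have e₂ := beta_swap hp₂ hq₂ hmem.1.le hmem.2.le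
    have hb₁ := beta_symm (p := n*a₁) (q := m*a₁)
    have hb₂ := beta_symm (p := n*a₂) (q := m*a₂)
    rw [e₁, e₂, hb₁, hb₂]
    set B₁' := ∫ s in (0:ℝ)..1, s ^ (m*a₁ - 1) * (1 - s) ^ (n*a₁ - 1)
    set B₂' := ∫ s in (0:ℝ)..1, s ^ (m*a₂ - 1) * (1 - s) ^ (n*a₂ - 1)
    set J₁ := ∫ s in (0:ℝ)..(1 - x), s ^ (m*a₁ - 1) * (1 - s) ^ (n*a₁ - 1)
    set J₂ := ∫ s in (0:ℝ)..(1 - x), s ^ (m*a₂ - 1) * (1 - s) ^ (n*a₂ - 1)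
    have r₁ : (B₁' - J₁) / B₁' = 1 - J₁ / B₁' := by
      rw [sub_div, div_self hB₁'.ne']
    have r₂ : (B₂' - J₂) / B₂' = 1 - J₂ / B₂' := by
      rw [sub_div, div_self hB₂'.ne']
    rw [r₁, r₂]
    linarith [hx]
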